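/- For all n ∈ ℕ and all 0 ≤ i, j ≤ n, the entries of the matrix U^{-1} (the weight matrix of the U-type network of order n under the inverse weighting) satisfy the closed-form formula U^{-1}[i,j] = (−1)^{i−j} Σ_{α ∈ Q^{SD}_{j,i}} ∏_{s=i}^{j−1} t_{α_{j−s}, s+1} (where the empty sum is 0 and the empty product is 1). -/

import Mathlib

set_option linter.unusedSectionVars false


/-- The heights of a `U^m_n`-path of order `n` (the abscissas `x i = m + i` are
determined, so only the heights `y i ∈ {0, …, n}`, encoded as `Fin (n+1)`, are recorded):
`y (k+1) ∈ {y k, y k + 1}` and a rise step at position `k` forces `y k ≥ k`. -/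
def IsUPath (n : ℕ) (y : Fin (n + 1) → Fin (n + 1)) : Prop :=
  ∀ k : Fin n,
    ((y k.succ = y k.castSucc ∨ (y k.succ : ℕ) = (y k.castSucc : ℕ) + 1) ∧
      ((y k.succ : ℕ) = (y k.castSucc : ℕ) + 1 → (k : ℕ) ≤ (y k.castSucc : ℕ)))

/-- The inverse weighting of a `U`-type path: a rise step from `(k, j-1)` to
`(k+1, j)` has weight `-t k j` and a horizontal step has weight `1`; the weight of the
path is the product of the weights of its steps. -/
def uinvweight {R : Type*} [CommRing R] (n : ℕ) (t : ℕ → ℕ → R)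
    (y : Fin (n + 1) → Fin (n + 1)) : R :=
  ∏ k : Fin n,
    if (y k.succ : ℕ) = (y k.castSucc : ℕ) + 1
    then -t (k : ℕ) (y k.succ : ℕ) else 1

open scoped Classical in
/-- The matrix `U⁻¹`: its `(i, j)` entry is the sum of the inverse weights of all
`U^0_n`-paths with `y 0 = i` and `y n = j`. -/
noncomputable def UinvMat {R : Type*} [CommRing R] (n : ℕ) (t : ℕ → ℕ → R) :
    Matrix (Fin (n + 1)) (Fin (n + 1)) R :=
  Matrix.of fun i j =>
    ∑ y ∈ Finset.univ.filter
        (fun y : Fin (n + 1) → Fin (n + 1) => IsUPath n y ∧ y 0 = i ∧ y (Fin.last n) = j),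
      uinvweight n t y

open scoped Classical in
/-- `Q^{SD}_{i,j}`: for `i ≥ j`, the strictly decreasing sequences `α₁ > … > α_{i-j}` of
nonnegative integers with `αᵣ ≤ i - r` (here zero-indexed, so `α k ≤ i - (k+1)`; the
values are encoded in `Fin (i+1)`); for `i = j` only the empty sequence, and for `i < j`
the empty set. -/
noncomputable def QSDset (i j : ℕ) : Finset (Fin (i - j) → Fin (i + 1)) :=
  if j ≤ i then
    Finset.univ.filter
      (fun α => StrictAnti α ∧ ∀ r : Fin (i - j), (α r : ℕ) ≤ i - ((r : ℕ) + 1))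
  else ∅



open Finset
open scoped Classical

lemma upath_step {n : ℕ} {y : Fin (n+1) → Fin (n+1)} (hy : IsUPath n y) (k : Fin n) :
    (y k.succ : ℕ) = (y k.castSucc : ℕ) ∨ (y k.succ : ℕ) = (y k.castSucc : ℕ) + 1 := by
  rcases (hy k).1 with h | h
  · exact Or.inl (by rw [h])
  · exact Or.inr h

lemma upath_mono {n : ℕ} {y : Fin (n+1) → Fin (n+1)} (hy : IsUPath n y) :
    Monotone y := by
  apply Fin.monotone_iff_le_succ.mpr
  intro k
  rcases upath_step hy k with h | h
  · exact Fin.le_def.mpr h.ge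
  · exact Fin.le_def.mpr (by omega)

lemma rise_unique {n : ℕ} {y : Fin (n+1) → Fin (n+1)} (hy : Monotone y)
    {k1 k2 : Fin n} {h : ℕ} (h1 : (y k1.castSucc : ℕ) < h) (h1' : (y k1.succ : ℕ) = h)
    (h2 : (y k2.castSucc : ℕ) < h) (h2' : (y k2.succ : ℕ) = h) : k1 = k2 := by
  by_contra hne
  rcases lt_or_gt_of_ne hne with hlt | hlt
  · have hle : k1.succ ≤ k2.castSucc := by
      rw [Fin.le_def]
      simp only [Fin.lt_def] at hlt
      simp only [Fin.val_succ, Fin.coe_castSucc]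
      omega
    have := Fin.le_def.mp (hy hle)
    omega
  · have hle : k2.succ ≤ k1.castSucc := by
      rw [Fin.le_def]
      simp only [Fin.lt_def] at hlt
      simp only [Fin.val_succ, Fin.coe_castSucc]
      omega
    have := Fin.le_def.mp (hy hle)
    omega

lemma exists_rise {n : ℕ} {y : Fin (n+1) → Fin (n+1)} (hy : IsUPath n y)
    {h : ℕ} (h0 : (y 0 : ℕ) < h) (hn : h ≤ (y (Fin.last n) : ℕ)) :
    ∃ k : Fin n, (y k.castSucc : ℕ) = h - 1 ∧ (y k.succ : ℕ) = h := by
  set s : Finset (Fin (n+1)) := univ.filter (fun k => h ≤ (y k : ℕ)) with hs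
  have hsne : s.Nonempty := ⟨Fin.last n, by simp [hs, hn]⟩
  set k1 := s.min' hsne with hk1
  have hk1mem : k1 ∈ s := s.min'_mem hsne
  have hk1le : h ≤ (y k1 : ℕ) := by
    have := hk1mem; simp [hs] at this; exact this
  have hk1ne : (k1 : ℕ) ≠ 0 := by
    intro h0'
    have : k1 = 0 := Fin.ext h0'
    rw [this] at hk1le; omega
  have hk1lt : (k1 : ℕ) < n + 1 := k1.isLt
  refine ⟨⟨(k1 : ℕ) - 1, by omega⟩, ?_⟩
  set k0 : Fin n := ⟨(k1 : ℕ) - 1, by omega⟩ with hk0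
  have hsucc : k0.succ = k1 := by apply Fin.ext; simp [hk0]; omega
  have hcastlt : (k0.castSucc : Fin (n+1)) < k1 := by
    rw [Fin.lt_def]; show (k1 : ℕ) - 1 < (k1 : ℕ); omega
  have hcastns : k0.castSucc ∉ s := by
    intro hmem
    exact absurd (s.min'_le _ hmem) (not_le.mpr hcastlt)
  have hcast : (y k0.castSucc : ℕ) < h := by
    by_contra hc
    exact hcastns (by simp [hs]; omega)
  have hstep := upath_step hy k0
  rw [hsucc] at hstep
  constructor <;> [skip; rw [hsucc]] <;> omega

noncomputable def pathOf (n J m I : ℕ) (α : Fin m → Fin (J+1)) : Fin (n+1) → Fin (n+1) :=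
  fun k => ⟨min n (I + (univ.filter fun q => (α q : ℕ) < (k : ℕ)).card), by omega⟩

lemma cfilter_le {J m : ℕ} (α : Fin m → Fin (J+1)) (N : ℕ) :
    (univ.filter fun q => (α q : ℕ) < N).card ≤ m := by
  calc (univ.filter fun q => (α q : ℕ) < N).card ≤ (univ : Finset (Fin m)).card :=
        card_filter_le _ _
    _ = m := by simp

lemma pathOf_val {n J m I : ℕ} (α : Fin m → Fin (J+1)) (hm : I + m ≤ n) (k : Fin (n+1)) :
    ((pathOf n J m I α k) : ℕ) = I + (univ.filter fun q => (α q : ℕ) < (k : ℕ)).card := by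
  have := cfilter_le α (k : ℕ)
  simp only [pathOf]
  omega

section QSDprops

variable {J m I : ℕ} {α : Fin m → Fin (J+1)}
variable (hα : StrictAnti α) (hb : ∀ r : Fin m, (α r : ℕ) ≤ J - ((r : ℕ) + 1))
variable (hm : I + m = J)

include hα in
lemma cfilter_at {q0 : Fin m} :
    (univ.filter fun q => (α q : ℕ) < (α q0 : ℕ)).card = m - ((q0 : ℕ) + 1) := by
  have : (univ.filter fun q => (α q : ℕ) < (α q0 : ℕ)) = Ioi q0 := by
    ext q
    simp only [mem_filter, mem_univ, true_and, mem_Ioi]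
    rw [← Fin.lt_def, hα.lt_iff_gt]
  rw [this, Fin.card_Ioi]
  omega

include hα in
lemma cfilter_at' {q0 : Fin m} :
    (univ.filter fun q => (α q : ℕ) < (α q0 : ℕ) + 1).card = m - (q0 : ℕ) := by
  have : (univ.filter fun q => (α q : ℕ) < (α q0 : ℕ) + 1) = Ici q0 := by
    ext q
    simp only [mem_filter, mem_univ, true_and, mem_Ici]
    rw [Nat.lt_succ_iff, ← Fin.le_def, hα.le_iff_ge]
  rw [this, Fin.card_Ici]

include hb hm in
lemma alpha_lt_n {n : ℕ} (hn : J ≤ n) (q : Fin m) : (α q : ℕ) < n := by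
  have h1 := hb q
  have h2 := q.isLt
  omega

lemma cfilter_none {N : ℕ} (hno : ∀ q : Fin m, (α q : ℕ) ≠ N) :
    (univ.filter fun q => (α q : ℕ) < N + 1) = (univ.filter fun q => (α q : ℕ) < N) := by
  apply filter_congr
  intro q _
  have := hno q
  constructor <;> intro <;> omega

end QSDprops

section PathProps

variable {n J m I : ℕ} {α : Fin m → Fin (J+1)}
variable (hα : StrictAnti α) (hb : ∀ r : Fin m, (α r : ℕ) ≤ J - ((r : ℕ) + 1))
variable (hm : I + m = J) (hn : J ≤ n)

include hα hb hm hn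

lemma pathOf_val_rise (q : Fin m) :
    ((pathOf n J m I α ⟨(α q : ℕ), by have := alpha_lt_n hb hm hn q; omega⟩ : Fin (n+1)) : ℕ)
      = J - ((q : ℕ) + 1) ∧
    ((pathOf n J m I α ⟨(α q : ℕ) + 1, by have := alpha_lt_n hb hm hn q; omega⟩ : Fin (n+1)) : ℕ)
      = J - (q : ℕ) := by
  have hq := q.isLt
  constructor
  · rw [pathOf_val α (by omega)]
    simp only
    rw [cfilter_at hα]
    omega
  · rw [pathOf_val α (by omega)]
    simp only
    rw [cfilter_at' hα]
    omega

lemma pathOf_isUPath : IsUPath n (pathOf n J m I α) := by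
  intro k
  have hcv : ((pathOf n J m I α k.castSucc : Fin (n+1)) : ℕ)
      = I + (univ.filter fun q => (α q : ℕ) < (k : ℕ)).card := by
    rw [pathOf_val α (by omega)]; simp
  have hsv : ((pathOf n J m I α k.succ : Fin (n+1)) : ℕ)
      = I + (univ.filter fun q => (α q : ℕ) < (k : ℕ) + 1).card := by
    rw [pathOf_val α (by omega)]; simp
  by_cases hex : ∃ q : Fin m, (α q : ℕ) = (k : ℕ)
  · obtain ⟨q, hq⟩ := hex
    have hqlt := q.isLt
    have h1 : ((pathOf n J m I α k.castSucc : Fin (n+1)) : ℕ) = J - ((q : ℕ) + 1) := by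
      rw [hcv, ← hq, cfilter_at hα]; omega
    have h2 : ((pathOf n J m I α k.succ : Fin (n+1)) : ℕ) = J - (q : ℕ) := by
      rw [hsv, ← hq, cfilter_at' hα]; omega
    constructor
    · right; omega
    · intro _
      have := hb q
      omega
  · push_neg at hex
    have heq : ((pathOf n J m I α k.succ : Fin (n+1)) : ℕ)
        = ((pathOf n J m I α k.castSucc : Fin (n+1)) : ℕ) := by
      rw [hcv, hsv, cfilter_none hex]
    constructor
    · left; exact Fin.ext heq
    · intro hcon; omega

lemma pathOf_rise_iff (k : Fin n) :
    (((pathOf n J m I α k.succ : Fin (n+1)) : ℕ)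
      = ((pathOf n J m I α k.castSucc : Fin (n+1)) : ℕ) + 1)
      ↔ ∃ q : Fin m, (α q : ℕ) = (k : ℕ) := by
  have hcv : ((pathOf n J m I α k.castSucc : Fin (n+1)) : ℕ)
      = I + (univ.filter fun q => (α q : ℕ) < (k : ℕ)).card := by
    rw [pathOf_val α (by omega)]; simp
  have hsv : ((pathOf n J m I α k.succ : Fin (n+1)) : ℕ)
      = I + (univ.filter fun q => (α q : ℕ) < (k : ℕ) + 1).card := by
    rw [pathOf_val α (by omega)]; simp
  constructor
  · intro hrise
    by_contra hex
    push_neg at hex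
    rw [hcv, hsv, cfilter_none hex] at hrise
    omega
  · intro ⟨q, hq⟩
    have hqlt := q.isLt
    rw [hcv, hsv, ← hq, cfilter_at hα, cfilter_at' hα]
    omega

lemma pathOf_zero : (pathOf n J m I α 0 : Fin (n+1)) = ⟨I, by omega⟩ := by
  apply Fin.ext
  rw [pathOf_val α (by omega)]
  simp

lemma pathOf_last : (pathOf n J m I α (Fin.last n) : Fin (n+1)) = ⟨J, by omega⟩ := by
  apply Fin.ext
  rw [pathOf_val α (by omega)]
  have : (univ.filter fun q => (α q : ℕ) < ((Fin.last n : Fin (n+1)) : ℕ)) = univ := by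
    apply filter_true_of_mem
    intro q _
    simpa using alpha_lt_n hb hm hn q
  rw [this]
  simp; omega

end PathProps

section More

variable {n J m I : ℕ} {α : Fin m → Fin (J+1)}
variable (hα : StrictAnti α) (hb : ∀ r : Fin m, (α r : ℕ) ≤ J - ((r : ℕ) + 1))
variable (hm : I + m = J) (hn : J ≤ n)

include hα hb hm hn

lemma pathOf_rise_vals (q : Fin m) (k : Fin n) (hk : (k : ℕ) = (α q : ℕ)) :
    ((pathOf n J m I α k.castSucc : Fin (n+1)) : ℕ) = J - ((q : ℕ) + 1) ∧
    ((pathOf n J m I α k.succ : Fin (n+1)) : ℕ) = J - (q : ℕ) := by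
  have hq := q.isLt
  constructor
  · rw [pathOf_val α (by omega)]
    simp only [Fin.coe_castSucc, hk]
    rw [cfilter_at hα]
    omega
  · rw [pathOf_val α (by omega)]
    simp only [Fin.val_succ, hk]
    rw [cfilter_at' hα]
    omega

end More

lemma pathOf_inj {n J m I : ℕ} {α α' : Fin m → Fin (J+1)}
    (hα : StrictAnti α) (hb : ∀ r : Fin m, (α r : ℕ) ≤ J - ((r : ℕ) + 1))
    (hα' : StrictAnti α') (hb' : ∀ r : Fin m, (α' r : ℕ) ≤ J - ((r : ℕ) + 1))
    (hm : I + m = J) (hn : J ≤ n)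
    (h : pathOf n J m I α = pathOf n J m I α') : α = α' := by
  funext q
  apply Fin.ext
  have hq := q.isLt
  have hmono := upath_mono (pathOf_isUPath hα hb hm hn)
  set e : Fin n := ⟨(α q : ℕ), alpha_lt_n hb hm hn q⟩ with he
  set e' : Fin n := ⟨(α' q : ℕ), alpha_lt_n hb' hm hn q⟩ with he'
  have h1 := pathOf_rise_vals hα hb hm hn q e rfl
  have h2 := pathOf_rise_vals hα' hb' hm hn q e' rfl
  rw [← h] at h2
  have : e = e' := by
    apply rise_unique hmono (h := J - (q : ℕ)) _ h1.2 _ h2.2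
    · rw [h1.1]; omega
    · rw [h2.1]; omega
  have := congrArg Fin.val this
  simpa [he, he'] using this

lemma pathOf_surj {n J m I : ℕ} (hm : I + m = J) (hn : J ≤ n)
    {y : Fin (n+1) → Fin (n+1)} (hy : IsUPath n y)
    (h0 : (y 0 : ℕ) = I) (hl : (y (Fin.last n) : ℕ) = J) :
    ∃ α : Fin m → Fin (J+1), StrictAnti α ∧ (∀ r : Fin m, (α r : ℕ) ≤ J - ((r : ℕ) + 1)) ∧
      pathOf n J m I α = y := by
  have hmono := upath_mono hy
  have key : ∀ q : Fin m, ∃ k : Fin n,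
      (y k.castSucc : ℕ) = J - ((q : ℕ) + 1) ∧ (y k.succ : ℕ) = J - (q : ℕ) := by
    intro q
    have hq := q.isLt
    obtain ⟨k, hk1, hk2⟩ := exists_rise hy (h := J - (q : ℕ)) (by omega) (by omega)
    exact ⟨k, by omega, hk2⟩
  choose k hk1 hk2 using key
  have hkb : ∀ q : Fin m, (k q : ℕ) ≤ J - ((q : ℕ) + 1) := by
    intro q
    have hq := q.isLt
    have e1 := hk1 q
    have := (hy (k q)).2 (by rw [hk1, hk2]; omega)
    omega
  have hval : ∀ kk : Fin (n+1),
      I + (univ.filter fun q => (k q : ℕ) < (kk : ℕ)).card = (y kk : ℕ) := by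
    intro kk
    induction kk using Fin.induction with
    | zero => simp [h0]
    | succ kk ih =>
      simp only [Fin.coe_castSucc] at ih
      simp only [Fin.val_succ]
      have hIle : I ≤ (y kk.castSucc : ℕ) := by
        have := Fin.le_def.mp (hmono (Fin.zero_le kk.castSucc))
        omega
      have hJge : (y kk.succ : ℕ) ≤ J := by
        have := Fin.le_def.mp (hmono (Fin.le_last kk.succ))
        omega
      rcases upath_step hy kk with hflat | hrise
      · have hno : ∀ q : Fin m, (k q : ℕ) ≠ (kk : ℕ) := by
          intro q hq
          have hkq : k q = kk := Fin.ext hq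
          have e1 := hk1 q
          have e2 := hk2 q
          rw [hkq] at e1 e2
          have hq2 := q.isLt
          omega
        have heq : (univ.filter fun q => (k q : ℕ) < (kk : ℕ) + 1)
            = (univ.filter fun q => (k q : ℕ) < (kk : ℕ)) := by
          apply filter_congr
          intro q _
          have := hno q
          constructor <;> intro <;> omega
        rw [heq]
        omega
      · have hhI : I + 1 ≤ (y kk.succ : ℕ) := by omega
        have hqslt : J - (y kk.succ : ℕ) < m := by omega
        set qs : Fin m := ⟨J - (y kk.succ : ℕ), hqslt⟩ with hqs
        have hkqs : k qs = kk := by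
          apply rise_unique hmono (h := (y kk.succ : ℕ))
          · rw [hk1]; simp only [hqs]; omega
          · rw [hk2]; simp only [hqs]; omega
          · omega
          · rfl
        have hkqsv : (k qs : ℕ) = (kk : ℕ) := congrArg Fin.val hkqs
        have hnotmem : qs ∉ univ.filter (fun q => (k q : ℕ) < (kk : ℕ)) := by
          intro hmem
          simp only [mem_filter] at hmem
          omega
        have hsplit : (univ.filter fun q => (k q : ℕ) < (kk : ℕ) + 1)
            = insert qs (univ.filter fun q => (k q : ℕ) < (kk : ℕ)) := by
          ext q
          simp only [mem_filter, mem_univ, true_and, mem_insert]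
          constructor
          · intro hlt
            by_cases hq : (k q : ℕ) = (kk : ℕ)
            · left
              have hkq : k q = kk := Fin.ext hq
              have e1 := hk2 q
              rw [hkq] at e1
              have e2 := q.isLt
              have e3 := qs.isLt
              apply Fin.ext
              simp only [hqs]
              omega
            · right; omega
          · rintro (rfl | hlt)
            · omega
            · omega
        rw [hsplit, card_insert_of_notMem hnotmem]
        omega
  set α : Fin m → Fin (J+1) := fun q => ⟨(k q : ℕ), by have := hkb q; have := q.isLt; omega⟩
    with hαdef
  have hαv : ∀ q, (α q : ℕ) = (k q : ℕ) := fun q => rfl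
  have hA : StrictAnti α := by
    intro q q' hlt
    have hltv : (q : ℕ) < (q' : ℕ) := hlt
    rw [Fin.lt_def]
    simp only [hαdef]
    have hq' := q'.isLt
    have h1 : (y (k q').succ : ℕ) < (y (k q).succ : ℕ) := by
      rw [hk2, hk2]; omega
    by_contra hc
    push_neg at hc
    have hle : (k q).succ ≤ (k q').succ := by
      rw [Fin.le_def]; simp only [Fin.val_succ]; omega
    have := Fin.le_def.mp (hmono hle)
    omega
  have hB : ∀ r : Fin m, (α r : ℕ) ≤ J - ((r : ℕ) + 1) := fun r => hkb r
  refine ⟨α, hA, hB, ?_⟩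
  funext kk
  apply Fin.ext
  rw [pathOf_val _ (by omega)]
  have hfe : (univ.filter fun q => (α q : ℕ) < (kk : ℕ))
      = (univ.filter fun q => (k q : ℕ) < (kk : ℕ)) := by
    apply filter_congr
    intro q _
    rw [hαv]
  rw [hfe, hval]


lemma pathOf_weight {R : Type*} [CommRing R] {n J m I : ℕ} (t : ℕ → ℕ → R)
    {α : Fin m → Fin (J+1)}
    (hα : StrictAnti α) (hb : ∀ r : Fin m, (α r : ℕ) ≤ J - ((r : ℕ) + 1))
    (hm : I + m = J) (hn : J ≤ n) :
    uinvweight n t (pathOf n J m I α) = ∏ q : Fin m, -(t (α q : ℕ) (J - (q : ℕ))) := by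
  unfold uinvweight
  rw [← Finset.prod_filter
    (fun k : Fin n => ((pathOf n J m I α k.succ : Fin (n+1)) : ℕ)
      = ((pathOf n J m I α k.castSucc : Fin (n+1)) : ℕ) + 1)
    (fun k : Fin n => -t (k : ℕ) ((pathOf n J m I α k.succ : Fin (n+1)) : ℕ))]
  set e : Fin m → Fin n := fun q => ⟨(α q : ℕ), alpha_lt_n hb hm hn q⟩ with he
  have hinj : Function.Injective e := by
    intro q q' hqq
    have := congrArg Fin.val hqq
    simp only [he] at this
    exact hα.injective (Fin.ext this)
  have hfe : (univ.filter fun k : Fin n =>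
      ((pathOf n J m I α k.succ : Fin (n+1)) : ℕ)
        = ((pathOf n J m I α k.castSucc : Fin (n+1)) : ℕ) + 1) = Finset.image e univ := by
    ext k
    simp only [mem_filter, mem_univ, true_and, Finset.mem_image]
    rw [pathOf_rise_iff hα hb hm hn k]
    constructor
    · rintro ⟨q, hq⟩
      exact ⟨q, Fin.ext hq⟩
    · rintro ⟨q, rfl⟩
      exact ⟨q, rfl⟩
  rw [hfe, Finset.prod_image (fun q _ q' _ h => hinj h)]
  apply Finset.prod_congr rfl
  intro q _
  have hv := (pathOf_rise_vals hα hb hm hn q (e q) rfl).2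
  rw [hv]

lemma prod_neg_fin {R : Type*} [CommRing R] (m : ℕ) (f : Fin m → R) :
    ∏ q : Fin m, -f q = (-1 : R) ^ m * ∏ q : Fin m, f q := by
  simp_rw [neg_eq_neg_one_mul (f _)]
  rw [Finset.prod_mul_distrib, Finset.prod_const]
  simp


/-- Closed-form formula for the entries of `U⁻¹`:
`U⁻¹ [i, j] = (-1)^(i-j) * ∑_{α ∈ Q^{SD}_{j,i}} ∏_{s=i}^{j-1} t (α (j-s)) (s+1)`, the
product being reindexed by `q = j - s - 1 ∈ {0, …, j-i-1}` (zero-indexed), so the factor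
for `q` is `t (α q) (j - q)`.  (For `i > j` both sides vanish, and for `i ≤ j` the sign
`(-1)^(i-j) = (-1)^(j-i)`, so the exponent is written with the natural subtraction
`j - i`.) -/
theorem stmt17 {R : Type*} [CommRing R] (n : ℕ) (t : ℕ → ℕ → R) (i j : Fin (n + 1)) :
    UinvMat n t i j =
      (-1 : R) ^ ((j : ℕ) - (i : ℕ)) *
        ∑ α ∈ QSDset (j : ℕ) (i : ℕ),
          ∏ q : Fin ((j : ℕ) - (i : ℕ)), t (α q : ℕ) ((j : ℕ) - (q : ℕ)) := by
  classical
  simp only [UinvMat, Matrix.of_apply]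
  by_cases hIJ : (i : ℕ) ≤ (j : ℕ)
  · have hm : (i : ℕ) + ((j : ℕ) - (i : ℕ)) = (j : ℕ) := by omega
    have hn : (j : ℕ) ≤ n := by have := j.isLt; omega
    rw [QSDset, if_pos hIJ, Finset.mul_sum]
    have hterm : ∀ α : Fin ((j : ℕ) - (i : ℕ)) → Fin ((j : ℕ) + 1),
        (-1 : R) ^ ((j : ℕ) - (i : ℕ)) * ∏ q, t (α q : ℕ) ((j : ℕ) - (q : ℕ))
          = ∏ q, -(t (α q : ℕ) ((j : ℕ) - (q : ℕ))) := by
      intro α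
      rw [prod_neg_fin]
    rw [Finset.sum_congr rfl (fun α _ => hterm α)]
    refine (Finset.sum_bij
      (fun α _ => pathOf n (j : ℕ) ((j : ℕ) - (i : ℕ)) (i : ℕ) α) ?_ ?_ ?_ ?_).symm
    · intro α hα
      simp only [mem_filter, mem_univ, true_and] at hα ⊢
      obtain ⟨h1, h2⟩ := hα
      refine ⟨pathOf_isUPath h1 h2 hm hn, ?_, ?_⟩
      · rw [pathOf_zero h1 h2 hm hn]
      · rw [pathOf_last h1 h2 hm hn]
    · intro α hα α' hα' h
      simp only [mem_filter, mem_univ, true_and] at hα hα'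
      exact pathOf_inj hα.1 hα.2 hα'.1 hα'.2 hm hn h
    · intro y hy
      simp only [mem_filter, mem_univ, true_and] at hy
      obtain ⟨h1, h2, h3⟩ := hy
      obtain ⟨α, hA, hB, hC⟩ := pathOf_surj hm hn h1
        (by rw [h2]) (by rw [h3])
      exact ⟨α, by simp only [mem_filter, mem_univ, true_and]; exact ⟨hA, hB⟩, hC⟩
    · intro α hα
      simp only [mem_filter, mem_univ, true_and] at hα
      exact (pathOf_weight t hα.1 hα.2 hm hn).symm
  · rw [QSDset, if_neg hIJ, Finset.sum_empty, mul_zero]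
    rw [Finset.filter_false_of_mem, Finset.sum_empty]
    intro y _
    rintro ⟨h1, h2, h3⟩
    have := Fin.le_def.mp (upath_mono h1 (Fin.zero_le (Fin.last n)))
    rw [h2, h3] at this
    exact hIJ this
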